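/- Let ψ be a continuous frame for H with frame operator S, and define the kernels A†(x,z) := ⟨S⁻²ψ_z, ψ_x⟩ and R(x,y) := ⟨ψ_y, S⁻¹ψ_x⟩. Then for all x, y ∈ X: ⟨S⁻¹ψ_y, S⁻¹ψ_x⟩ = ∫_X A†(x,z) R(z,y) dμ(z). Consequently, if m is an admissible weight with ‖A†‖_{A_m} < ∞ and ‖R‖_{A_m} < ∞, then the Gramian kernel of the canonical dual frame, G(S⁻¹F,S⁻¹F)(x,y) := ⟨S⁻¹ψ_y, S⁻¹ψ_x⟩, satisfies ‖G(S⁻¹F,S⁻¹F)‖_{A_m} ≤ ‖A†‖_{A_m} · ‖R‖_{A_m}; that is, the canonical dual frame is intrinsically A_m-localized. -/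

import Mathlib

open MeasureTheory ENNReal
open scoped ENNReal NNReal

noncomputable section

local notation "⟪" x ", " y "⟫" => @inner ℂ _ _ x y

/-- The norm of the Banach algebra `A_m` of kernels on `X × X`. -/
def amNorm {X : Type*} [MeasurableSpace X] (μ : Measure X) (m K : X → X → ℝ) : ℝ≥0∞ :=
  max (essSup (fun x => ∫⁻ y, ENNReal.ofReal (|K x y| * m x y) ∂μ) μ)
      (essSup (fun y => ∫⁻ x, ENNReal.ofReal (|K x y| * m x y) ∂μ) μ)

open scoped Topology

private lemma measurable_tsum_cplx {α ι : Type*} [MeasurableSpace α] [Countable ι]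
    {f : ι → α → ℂ} (hf : ∀ i, Measurable (f i)) (hs : ∀ a, Summable fun i => f i a) :
    Measurable fun a => ∑' i, f i a := by
  refine measurable_of_tendsto_metrizable' (Filter.atTop : Filter (Finset ι))
    (fun s : Finset ι => s.measurable_sum fun i _ => hf i) ?_
  rw [tendsto_pi_nhds]
  intro a
  exact (hs a).hasSum

private lemma countable_of_orthonormal {H : Type*} [NormedAddCommGroup H]
    [InnerProductSpace ℂ H] [TopologicalSpace.SeparableSpace H]
    {ι : Type*} {b : ι → H} (hb : Orthonormal ℂ b) : Countable ι := by
  refine Pairwise.countable_of_isOpen_disjoint (s := fun i => Metric.ball (b i) (1/2))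
    ?_ (fun i => Metric.isOpen_ball) (fun i => Metric.nonempty_ball.2 (by norm_num))
  intro i j hij
  refine Metric.ball_disjoint_ball ?_
  have h2 : ‖b i - b j‖ ^ 2 = 2 := by
    rw [@norm_sub_sq ℂ, hb.1 i, hb.1 j, hb.2 hij]
    norm_num
  have h3 : 0 ≤ ‖b i - b j‖ := norm_nonneg _
  rw [dist_eq_norm]
  nlinarith

private lemma measurable_inner_prod {X Y H : Type*} [MeasurableSpace X] [MeasurableSpace Y]
    [NormedAddCommGroup H] [InnerProductSpace ℂ H] [CompleteSpace H]
    [TopologicalSpace.SeparableSpace H]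
    (u : X → H) (v : Y → H)
    (hu : ∀ f : H, Measurable fun x => ⟪u x, f⟫)
    (hv : ∀ f : H, Measurable fun y => ⟪f, v y⟫) :
    Measurable fun p : X × Y => ⟪u p.1, v p.2⟫ := by
  obtain ⟨w, b, -⟩ := exists_hilbertBasis ℂ H
  haveI : Countable w := countable_of_orthonormal b.orthonormal
  have key : (fun p : X × Y => ⟪u p.1, v p.2⟫)
      = fun p : X × Y => ∑' i : w, ⟪u p.1, b i⟫ * ⟪b i, v p.2⟫ := by
    funext p
    exact (b.tsum_inner_mul_inner _ _).symm
  rw [key]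
  exact measurable_tsum_cplx
    (fun i => ((hu (b i)).comp measurable_fst).mul ((hv (b i)).comp measurable_snd))
    (fun p => b.summable_inner_mul_inner _ _)


private lemma measurable_continuous_prod_aux {X : Type*} [TopologicalSpace X] [T2Space X]
    [MeasurableSpace X] [BorelSpace X] {K L : Set X} (hK : IsCompact K) (hL : IsCompact L)
    {f : X × X → ℝ} (hf : Continuous f) :
    Measurable fun p : ↥K × ↥L => f ((p.1 : X), (p.2 : X)) := by
  haveI : CompactSpace ↥K := isCompact_iff_compactSpace.mp hK
  haveI : CompactSpace ↥L := isCompact_iff_compactSpace.mp hL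
  -- the subalgebra of continuous functions with product-measurable coercion
  let A : Subalgebra ℝ C(↥K × ↥L, ℝ) :=
    { carrier := {h : C(↥K × ↥L, ℝ) | Measurable ⇑h}
      mul_mem' := fun hg hh => hg.mul hh
      add_mem' := fun hg hh => hg.add hh
      one_mem' := measurable_const
      zero_mem' := measurable_const
      algebraMap_mem' := fun r => by
        have h : ⇑(algebraMap ℝ C(↥K × ↥L, ℝ) r) = fun _ => r := rfl
        show Measurable ⇑(algebraMap ℝ C(↥K × ↥L, ℝ) r)
        rw [h]
        exact measurable_const }
  have hsep : A.SeparatesPoints := by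
    rintro p q hpq
    have hor : p.1 ≠ q.1 ∨ p.2 ≠ q.2 := by
      by_contra h
      push_neg at h
      exact hpq (Prod.ext h.1 h.2)
    rcases hor with h1 | h2
    · obtain ⟨φ, hφ0, hφ1, -⟩ := exists_continuous_zero_one_of_isClosed
        (isClosed_singleton (x := p.1)) (isClosed_singleton (x := q.1))
        (Set.disjoint_singleton.mpr h1)
      refine ⟨_, ⟨φ.comp ⟨Prod.fst, continuous_fst⟩,
        (map_continuous φ).measurable.comp measurable_fst, rfl⟩, ?_⟩
      have e0 : φ p.1 = 0 := hφ0 rfl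
      have e1 : φ q.1 = 1 := hφ1 rfl
      simp only [ContinuousMap.comp_apply, ContinuousMap.coe_mk, e0, e1]
      norm_num
    · obtain ⟨φ, hφ0, hφ1, -⟩ := exists_continuous_zero_one_of_isClosed
        (isClosed_singleton (x := p.2)) (isClosed_singleton (x := q.2))
        (Set.disjoint_singleton.mpr h2)
      refine ⟨_, ⟨φ.comp ⟨Prod.snd, continuous_snd⟩,
        (map_continuous φ).measurable.comp measurable_snd, rfl⟩, ?_⟩
      have e0 : φ p.2 = 0 := hφ0 rfl
      have e1 : φ q.2 = 1 := hφ1 rfl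
      simp only [ContinuousMap.comp_apply, ContinuousMap.coe_mk, e0, e1]
      norm_num
  set F : C(↥K × ↥L, ℝ) := ⟨fun p => f ((p.1 : X), (p.2 : X)),
    hf.comp ((continuous_subtype_val.comp continuous_fst).prodMk
      (continuous_subtype_val.comp continuous_snd))⟩ with hF
  have happrox : ∀ n : ℕ, ∃ g : A, ‖(g : C(↥K × ↥L, ℝ)) - F‖ < 1/(n+1) := fun n =>
    ContinuousMap.exists_mem_subalgebra_near_continuousMap_of_separatesPoints A hsep F _
      (by positivity)
  choose g hg using happrox
  have hlim : ∀ p, Filter.Tendsto (fun n => ((g n : C(↥K × ↥L, ℝ)) p : ℝ))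
      Filter.atTop (𝓝 (F p)) := by
    intro p
    rw [tendsto_iff_dist_tendsto_zero]
    refine squeeze_zero (fun n => dist_nonneg) (fun n => ?_)
      tendsto_one_div_add_atTop_nhds_zero_nat
    calc dist ((g n : C(↥K × ↥L, ℝ)) p) (F p)
        ≤ dist (g n : C(↥K × ↥L, ℝ)) F := ContinuousMap.dist_apply_le_dist p
      _ ≤ 1/(n+1) := by
          rw [dist_eq_norm]
          exact (hg n).le
  exact measurable_of_tendsto_metrizable (fun n => (g n).2) (tendsto_pi_nhds.mpr hlim)

private lemma measurable_of_continuous_prod {X : Type*} [TopologicalSpace X] [T2Space X]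
    [LocallyCompactSpace X] [SigmaCompactSpace X] [MeasurableSpace X] [BorelSpace X]
    {f : X × X → ℝ} (hf : Continuous f) : Measurable f := by
  have hK : ∀ n, IsCompact (compactCovering X n) := isCompact_compactCovering X
  have hKm : ∀ n, MeasurableSet (compactCovering X n) := fun n => (hK n).isClosed.measurableSet
  have hmeas : ∀ n : ℕ, Measurable ((compactCovering X n ×ˢ compactCovering X n).indicator f) := by
    intro n
    have me : MeasurableEmbedding (fun p : ↥(compactCovering X n) × ↥(compactCovering X n) =>
        ((p.1 : X), (p.2 : X))) :=
      (MeasurableEmbedding.subtype_coe (hKm n)).prodMap (MeasurableEmbedding.subtype_coe (hKm n))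
    have hg := measurable_continuous_prod_aux (hK n) (hK n) hf
    have hext : (compactCovering X n ×ˢ compactCovering X n).indicator f = Function.extend
        (fun p : ↥(compactCovering X n) × ↥(compactCovering X n) => ((p.1 : X), (p.2 : X)))
        (fun p => f ((p.1 : X), (p.2 : X))) (fun _ => 0) := by
      funext p
      by_cases hp : p.1 ∈ compactCovering X n ∧ p.2 ∈ compactCovering X n
      · have h1 : (compactCovering X n ×ˢ compactCovering X n).indicator f p = f p :=
          Set.indicator_of_mem (Set.mem_prod.mpr hp) f
        have h2 : Function.extend
            (fun p : ↥(compactCovering X n) × ↥(compactCovering X n) => ((p.1 : X), (p.2 : X)))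
            (fun p => f ((p.1 : X), (p.2 : X))) (fun _ => 0) p
            = f ((⟨p.1, hp.1⟩ : ↥(compactCovering X n)).1, (⟨p.2, hp.2⟩ : ↥(compactCovering X n)).1) := by
          exact me.injective.extend_apply
            (fun q : ↥(compactCovering X n) × ↥(compactCovering X n) => f ((q.1 : X), (q.2 : X)))
            (fun _ => (0:ℝ)) ((⟨p.1, hp.1⟩, ⟨p.2, hp.2⟩))
        rw [h1, h2]
      · rw [Set.indicator_of_notMem (fun hmem => hp (Set.mem_prod.mp hmem)),
          Function.extend_apply']
        rintro ⟨a, ha⟩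
        exact hp (by rw [← ha]; exact ⟨a.1.2, a.2.2⟩)
    rw [hext]
    exact me.measurable_extend hg measurable_const
  refine measurable_of_tendsto_metrizable hmeas (tendsto_pi_nhds.mpr fun p => ?_)
  obtain ⟨n1, hn1⟩ := exists_mem_compactCovering p.1
  obtain ⟨n2, hn2⟩ := exists_mem_compactCovering p.2
  refine Filter.Tendsto.congr' ?_ tendsto_const_nhds
  filter_upwards [Filter.eventually_ge_atTop (max n1 n2)] with n hn
  have h1 : p.1 ∈ compactCovering X n :=
    compactCovering_subset X ((le_max_left _ _).trans hn) hn1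
  have h2 : p.2 ∈ compactCovering X n :=
    compactCovering_subset X ((le_max_right _ _).trans hn) hn2
  exact (Set.indicator_of_mem (Set.mem_prod.mpr ⟨h1, h2⟩) f).symm

private lemma schur_row {X : Type*} [MeasurableSpace X] (μ : Measure X) [SFinite μ]
    (m : X → X → ℝ) (hm0 : ∀ x y, 0 ≤ m x y) (hms : ∀ x y z, m x y ≤ m x z * m z y)
    (hmm : Measurable fun p : X × X => m p.1 p.2)
    (A R G : X → X → ℝ) (hA0 : ∀ x z, 0 ≤ A x z) (hR0 : ∀ z y, 0 ≤ R z y)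
    (hAm : Measurable fun p : X × X => A p.1 p.2)
    (hRm : Measurable fun p : X × X => R p.1 p.2)
    (hG : ∀ x y, ENNReal.ofReal |G x y| ≤ ∫⁻ z, ENNReal.ofReal (A x z * R z y) ∂μ) :
    essSup (fun x => ∫⁻ y, ENNReal.ofReal (|G x y| * m x y) ∂μ) μ ≤
      amNorm μ m A * amNorm μ m R := by
  have hram : Measurable fun p : X × X => ENNReal.ofReal (|R p.1 p.2| * m p.1 p.2) :=
    (hRm.abs.mul hmm).ennreal_ofReal
  have haam : Measurable fun p : X × X => ENNReal.ofReal (|A p.1 p.2| * m p.1 p.2) :=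
    (hAm.abs.mul hmm).ennreal_ofReal
  have key : ∀ x y, ENNReal.ofReal (|G x y| * m x y) ≤
      ∫⁻ z, ENNReal.ofReal (|A x z| * m x z) * ENNReal.ofReal (|R z y| * m z y) ∂μ := by
    intro x y
    rw [ENNReal.ofReal_mul (abs_nonneg _)]
    refine le_trans (mul_le_mul_left (hG x y) _) ?_
    have hmeasz : Measurable fun z => ENNReal.ofReal (A x z * R z y) :=
      ((hAm.comp measurable_prodMk_left).mul
        (hRm.comp measurable_prodMk_right)).ennreal_ofReal
    rw [← lintegral_mul_const _ hmeasz]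
    refine lintegral_mono fun z => ?_
    have h1 : ENNReal.ofReal (|A x z| * m x z) * ENNReal.ofReal (|R z y| * m z y)
        = ENNReal.ofReal (A x z * m x z * (R z y * m z y)) := by
      rw [abs_of_nonneg (hA0 x z), abs_of_nonneg (hR0 z y),
        ENNReal.ofReal_mul (mul_nonneg (hA0 x z) (hm0 x z))]
    rw [h1, ← ENNReal.ofReal_mul (mul_nonneg (hA0 x z) (hR0 z y))]
    refine ENNReal.ofReal_le_ofReal ?_
    calc A x z * R z y * m x y ≤ A x z * R z y * (m x z * m z y) :=
          mul_le_mul_of_nonneg_left (hms x y z) (mul_nonneg (hA0 x z) (hR0 z y))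
      _ = A x z * m x z * (R z y * m z y) := by ring
  have hRrow : ∀ᵐ z ∂μ, (∫⁻ y, ENNReal.ofReal (|R z y| * m z y) ∂μ) ≤ amNorm μ m R :=
    (ENNReal.ae_le_essSup fun z => ∫⁻ y, ENNReal.ofReal (|R z y| * m z y) ∂μ).mono
      fun z hz => hz.trans (le_max_left _ _)
  have hArow : ∀ᵐ x ∂μ, (∫⁻ z, ENNReal.ofReal (|A x z| * m x z) ∂μ) ≤ amNorm μ m A :=
    (ENNReal.ae_le_essSup fun x => ∫⁻ z, ENNReal.ofReal (|A x z| * m x z) ∂μ).mono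
      fun x hx => hx.trans (le_max_left _ _)
  refine essSup_le_of_ae_le _ ?_
  filter_upwards [hArow] with x hx
  calc ∫⁻ y, ENNReal.ofReal (|G x y| * m x y) ∂μ
      ≤ ∫⁻ y, ∫⁻ z,
          ENNReal.ofReal (|A x z| * m x z) * ENNReal.ofReal (|R z y| * m z y) ∂μ ∂μ :=
        lintegral_mono fun y => key x y
    _ = ∫⁻ z, ∫⁻ y,
          ENNReal.ofReal (|A x z| * m x z) * ENNReal.ofReal (|R z y| * m z y) ∂μ ∂μ := by
        refine lintegral_lintegral_swap ?_
        have h1 : Measurable fun p : X × X =>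
            ENNReal.ofReal (|A x p.2| * m x p.2) * ENNReal.ofReal (|R p.2 p.1| * m p.2 p.1) :=
          (haam.comp ((measurable_const.prodMk measurable_snd) :
            Measurable fun p : X × X => (x, p.2))).mul (hram.comp measurable_swap)
        exact h1.aemeasurable
    _ = ∫⁻ z, ENNReal.ofReal (|A x z| * m x z) *
          ∫⁻ y, ENNReal.ofReal (|R z y| * m z y) ∂μ ∂μ := by
        refine lintegral_congr fun z => ?_
        have h2 : Measurable fun y => ENNReal.ofReal (|R z y| * m z y) :=
          hram.comp measurable_prodMk_left
        exact lintegral_const_mul _ h2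
    _ ≤ ∫⁻ z, ENNReal.ofReal (|A x z| * m x z) * amNorm μ m R ∂μ :=
        lintegral_mono_ae (hRrow.mono fun z hz => mul_le_mul_right hz _)
    _ = (∫⁻ z, ENNReal.ofReal (|A x z| * m x z) ∂μ) * amNorm μ m R := by
        have h3 : Measurable fun z => ENNReal.ofReal (|A x z| * m x z) :=
          haam.comp measurable_prodMk_left
        exact lintegral_mul_const _ h3
    _ ≤ amNorm μ m A * amNorm μ m R := mul_le_mul_left hx _

private lemma amNorm_transpose {X : Type*} [MeasurableSpace X] (μ : Measure X)
    (m K : X → X → ℝ) :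
    amNorm μ (fun x y => m y x) (fun x y => K y x) = amNorm μ m K := by
  unfold amNorm
  exact max_comm _ _

private lemma schur_col {X : Type*} [MeasurableSpace X] (μ : Measure X) [SFinite μ]
    (m : X → X → ℝ) (hm0 : ∀ x y, 0 ≤ m x y) (hms : ∀ x y z, m x y ≤ m x z * m z y)
    (hmm : Measurable fun p : X × X => m p.1 p.2)
    (A R G : X → X → ℝ) (hA0 : ∀ x z, 0 ≤ A x z) (hR0 : ∀ z y, 0 ≤ R z y)
    (hAm : Measurable fun p : X × X => A p.1 p.2)
    (hRm : Measurable fun p : X × X => R p.1 p.2)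
    (hG : ∀ x y, ENNReal.ofReal |G x y| ≤ ∫⁻ z, ENNReal.ofReal (A x z * R z y) ∂μ) :
    essSup (fun y => ∫⁻ x, ENNReal.ofReal (|G x y| * m x y) ∂μ) μ ≤
      amNorm μ m A * amNorm μ m R := by
  have h := schur_row μ (fun x y => m y x) (fun x y => hm0 y x)
    (fun x y z => (hms y x z).trans_eq (mul_comm _ _)) (hmm.comp measurable_swap)
    (fun y z => R z y) (fun z x => A x z) (fun y x => G x y)
    (fun y z => hR0 z y) (fun z x => hA0 x z)
    (hRm.comp measurable_swap) (hAm.comp measurable_swap)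
    (fun y x => (hG x y).trans_eq (lintegral_congr fun z => by rw [mul_comm]))
  have e1 : amNorm μ (fun x y => m y x) (fun y z => R z y) = amNorm μ m R :=
    amNorm_transpose μ m R
  have e2 : amNorm μ (fun x y => m y x) (fun z x => A x z) = amNorm μ m A :=
    amNorm_transpose μ m A
  rw [e1, e2] at h
  exact h.trans_eq (mul_comm _ _)

set_option maxHeartbeats 1600000 in
/-- The Gramian of the canonical dual frame factors through the kernels
`A†(x,z) = ⟨S⁻²ψ_z, ψ_x⟩` and `R(x,y) = ⟨ψ_y, S⁻¹ψ_x⟩`: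
`G(S⁻¹F,S⁻¹F) = A† ∘ R`; consequently, if `A†, R ∈ A_m` then the canonical dual frame is
intrinsically `A_m`-localized, with `‖G(S⁻¹F,S⁻¹F)‖_{A_m} ≤ ‖A†‖_{A_m}·‖R‖_{A_m}`.
(The paper's `⟨a,b⟩` is `⟪b,a⟫` in Mathlib's convention.) -/
theorem canonical_dual_intrinsically_localized
    {X : Type*} [TopologicalSpace X] [T2Space X] [LocallyCompactSpace X]
    [SigmaCompactSpace X] [MeasurableSpace X] [BorelSpace X]
    (μ : Measure X) [μ.Regular] [μ.IsOpenPosMeasure]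
    {H : Type*} [NormedAddCommGroup H] [InnerProductSpace ℂ H] [CompleteSpace H]
    [TopologicalSpace.SeparableSpace H]
    (ψ : X → H)
    (hcont : ∀ f : H, Continuous fun x => ⟪ψ x, f⟫)
    (C₁ C₂ : ℝ) (hC₁ : 0 < C₁) (hC₁₂ : C₁ ≤ C₂)
    (hInt : ∀ f : H, Integrable (fun x => ‖⟪ψ x, f⟫‖ ^ 2) μ)
    (hlow : ∀ f : H, C₁ * ‖f‖ ^ 2 ≤ ∫ x, ‖⟪ψ x, f⟫‖ ^ 2 ∂μ)
    (hup : ∀ f : H, ∫ x, ‖⟪ψ x, f⟫‖ ^ 2 ∂μ ≤ C₂ * ‖f‖ ^ 2)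
    (S : H →L[ℂ] H)
    (hS : ∀ f g : H, ⟪g, S f⟫ = ∫ x, ⟪ψ x, f⟫ * ⟪g, ψ x⟫ ∂μ)
    (Sinv : H →L[ℂ] H)
    (hleft : ∀ f, Sinv (S f) = f) (hright : ∀ f, S (Sinv f) = f)
    -- admissible weight `m`
    (m : X → X → ℝ)
    (hm_cont : Continuous fun p : X × X => m p.1 p.2)
    (hm_one : ∀ x y, 1 ≤ m x y)
    (hm_symm : ∀ x y, m x y = m y x)
    (hm_submult : ∀ x y z, m x y ≤ m x z * m z y)
    (hm_diag : ∃ Cm : ℝ, ∀ x, m x x ≤ Cm) :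
    -- the kernel identity `G(S⁻¹F,S⁻¹F)(x,y) = ∫ A†(x,z) R(z,y) dμ(z)`, with an absolutely
    -- convergent integral
    (∀ x y : X,
      Integrable (fun z => ⟪ψ x, Sinv (Sinv (ψ z))⟫ * ⟪Sinv (ψ z), ψ y⟫) μ ∧
      ⟪Sinv (ψ x), Sinv (ψ y)⟫ =
        ∫ z, ⟪ψ x, Sinv (Sinv (ψ z))⟫ * ⟪Sinv (ψ z), ψ y⟫ ∂μ) ∧
    -- consequently, `A†, R ∈ A_m` implies the canonical dual is intrinsically localized
    (amNorm μ m (fun x z => ‖⟪ψ x, Sinv (Sinv (ψ z))⟫‖) < ⊤ →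
      amNorm μ m (fun x y => ‖⟪Sinv (ψ x), ψ y⟫‖) < ⊤ →
      amNorm μ m (fun x y => ‖⟪Sinv (ψ x), Sinv (ψ y)⟫‖) ≤
        amNorm μ m (fun x z => ‖⟪ψ x, Sinv (Sinv (ψ z))⟫‖) *
          amNorm μ m (fun x y => ‖⟪Sinv (ψ x), ψ y⟫‖) ∧
      amNorm μ m (fun x y => ‖⟪Sinv (ψ x), Sinv (ψ y)⟫‖) < ⊤) := by
  -- self-adjointness of `S` and `Sinv`
  have hSA : ∀ a b : H, ⟪S a, b⟫ = ⟪a, S b⟫ := by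
    intro a b
    rw [← inner_conj_symm (S a) b, hS a b, ← integral_conj, hS b a]
    refine integral_congr_ae (Filter.Eventually.of_forall fun x => ?_)
    simp only [map_mul, inner_conj_symm]
    ring
  have hSinvA : ∀ a b : H, ⟪Sinv a, b⟫ = ⟪a, Sinv b⟫ := by
    intro a b
    calc ⟪Sinv a, b⟫ = ⟪Sinv a, S (Sinv b)⟫ := by rw [hright]
      _ = ⟪S (Sinv a), Sinv b⟫ := (hSA _ _).symm
      _ = ⟪a, Sinv b⟫ := by rw [hright]
  -- part 1
  have part1 : ∀ x y : X,
      Integrable (fun z => ⟪ψ x, Sinv (Sinv (ψ z))⟫ * ⟪Sinv (ψ z), ψ y⟫) μ ∧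
      ⟪Sinv (ψ x), Sinv (ψ y)⟫ =
        ∫ z, ⟪ψ x, Sinv (Sinv (ψ z))⟫ * ⟪Sinv (ψ z), ψ y⟫ ∂μ := by
    intro x y
    have hfun : (fun z => ⟪ψ x, Sinv (Sinv (ψ z))⟫ * ⟪Sinv (ψ z), ψ y⟫)
        = fun z => ⟪ψ z, Sinv (ψ y)⟫ *
            (starRingEnd ℂ) ⟪ψ z, Sinv (Sinv (ψ x))⟫ := by
      funext z
      rw [← hSinvA (ψ x), ← hSinvA (Sinv (ψ x)), hSinvA (ψ z),
        ← inner_conj_symm (Sinv (Sinv (ψ x))) (ψ z)]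
      ring
    have hcont2 : Continuous fun z =>
        ⟪ψ z, Sinv (ψ y)⟫ * (starRingEnd ℂ) ⟪ψ z, Sinv (Sinv (ψ x))⟫ :=
      (hcont _).mul (RCLike.continuous_conj.comp (hcont _))
    have hint : Integrable (fun z =>
        ⟪ψ z, Sinv (ψ y)⟫ * (starRingEnd ℂ) ⟪ψ z, Sinv (Sinv (ψ x))⟫) μ := by
      refine Integrable.mono' (((hInt (Sinv (ψ y))).add (hInt (Sinv (Sinv (ψ x))))).div_const 2)
        hcont2.aestronglyMeasurable (Filter.Eventually.of_forall fun z => ?_)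
      rw [norm_mul, RCLike.norm_conj]
      have h1 := norm_nonneg ⟪ψ z, Sinv (ψ y)⟫
      have h2 := norm_nonneg ⟪ψ z, Sinv (Sinv (ψ x))⟫
      have h3 := sq_nonneg (‖⟪ψ z, Sinv (ψ y)⟫‖ - ‖⟪ψ z, Sinv (Sinv (ψ x))⟫‖)
      simp only [Pi.add_apply]
      nlinarith
    have heq : ⟪Sinv (ψ x), Sinv (ψ y)⟫ =
        ∫ z, ⟪ψ z, Sinv (ψ y)⟫ * (starRingEnd ℂ) ⟪ψ z, Sinv (Sinv (ψ x))⟫ ∂μ := by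
      calc ⟪Sinv (ψ x), Sinv (ψ y)⟫ = ⟪Sinv (Sinv (ψ x)), ψ y⟫ := (hSinvA _ _).symm
        _ = ⟪Sinv (Sinv (ψ x)), S (Sinv (ψ y))⟫ := by rw [hright]
        _ = ∫ z, ⟪ψ z, Sinv (ψ y)⟫ * ⟪Sinv (Sinv (ψ x)), ψ z⟫ ∂μ := hS _ _
        _ = ∫ z, ⟪ψ z, Sinv (ψ y)⟫ * (starRingEnd ℂ) ⟪ψ z, Sinv (Sinv (ψ x))⟫ ∂μ := by
            refine integral_congr_ae (Filter.Eventually.of_forall fun z => ?_)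
            simp only [inner_conj_symm]
    rw [hfun]
    exact ⟨hint, heq⟩
  refine ⟨part1, ?_⟩
  intro hA hR
  -- measurability setup
  letI : MeasurableSpace H := borel H
  haveI : BorelSpace H := ⟨rfl⟩
  have hmU : ∀ f : H, Measurable fun x => ⟪ψ x, f⟫ := fun f => (hcont f).measurable
  have MA : Measurable fun p : X × X => ⟪ψ p.1, Sinv (Sinv (ψ p.2))⟫ := by
    refine measurable_inner_prod ψ (fun z => Sinv (Sinv (ψ z))) hmU fun f => ?_
    have h : (fun y => ⟪f, Sinv (Sinv (ψ y))⟫)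
        = fun y => (starRingEnd ℂ) ⟪ψ y, Sinv (Sinv f)⟫ := by
      funext y
      rw [← inner_conj_symm f, hSinvA (Sinv (ψ y)), hSinvA (ψ y)]
    rw [h]
    exact (RCLike.continuous_conj (K := ℂ)).measurable.comp (hmU _)
  have MR : Measurable fun p : X × X => ⟪Sinv (ψ p.1), ψ p.2⟫ := by
    refine measurable_inner_prod (fun z => Sinv (ψ z)) ψ (fun f => ?_) (fun f => ?_)
    · have h : (fun x => ⟪Sinv (ψ x), f⟫) = fun x => ⟪ψ x, Sinv f⟫ := by
        funext x; rw [hSinvA]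
      rw [h]; exact hmU _
    · have h : (fun y => ⟪f, ψ y⟫) = fun y => (starRingEnd ℂ) ⟪ψ y, f⟫ := by
        funext y; rw [inner_conj_symm]
      rw [h]
      exact (RCLike.continuous_conj (K := ℂ)).measurable.comp (hmU _)
  have MG : Measurable fun p : X × X => ⟪Sinv (ψ p.1), Sinv (ψ p.2)⟫ := by
    refine measurable_inner_prod (fun z => Sinv (ψ z)) (fun z => Sinv (ψ z))
      (fun f => ?_) (fun f => ?_)
    · have h : (fun x => ⟪Sinv (ψ x), f⟫) = fun x => ⟪ψ x, Sinv f⟫ := by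
        funext x; rw [hSinvA]
      rw [h]; exact hmU _
    · have h : (fun y => ⟪f, Sinv (ψ y)⟫) = fun y => (starRingEnd ℂ) ⟪ψ y, Sinv f⟫ := by
        funext y; rw [← inner_conj_symm f, hSinvA]
      rw [h]
      exact (RCLike.continuous_conj (K := ℂ)).measurable.comp (hmU _)
  have hm0 : ∀ x y, 0 ≤ m x y := fun x y => le_trans zero_le_one (hm_one x y)
  have hmm : Measurable fun p : X × X => m p.1 p.2 := measurable_of_continuous_prod hm_cont
  have hmm' : Measurable fun p : X × X => m p.2 p.1 := hmm.comp measurable_swap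
  -- the key pointwise bound from part 1
  have hGkey : ∀ x y, ENNReal.ofReal |‖⟪Sinv (ψ x), Sinv (ψ y)⟫‖| ≤
      ∫⁻ z, ENNReal.ofReal (‖⟪ψ x, Sinv (Sinv (ψ z))⟫‖ * ‖⟪Sinv (ψ z), ψ y⟫‖) ∂μ := by
    intro x y
    obtain ⟨hint, heq⟩ := part1 x y
    calc ENNReal.ofReal |‖⟪Sinv (ψ x), Sinv (ψ y)⟫‖|
        = (‖⟪Sinv (ψ x), Sinv (ψ y)⟫‖₊ : ℝ≥0∞) := by
          rw [abs_norm, ofReal_norm, enorm_eq_nnnorm]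
      _ = (‖∫ z, ⟪ψ x, Sinv (Sinv (ψ z))⟫ * ⟪Sinv (ψ z), ψ y⟫ ∂μ‖₊ : ℝ≥0∞) := by rw [heq]
      _ ≤ ∫⁻ z, (‖⟪ψ x, Sinv (Sinv (ψ z))⟫ * ⟪Sinv (ψ z), ψ y⟫‖₊ : ℝ≥0∞) ∂μ :=
          enorm_integral_le_lintegral_enorm _
      _ = ∫⁻ z, ENNReal.ofReal (‖⟪ψ x, Sinv (Sinv (ψ z))⟫‖ * ‖⟪Sinv (ψ z), ψ y⟫‖) ∂μ := by
          refine lintegral_congr fun z => ?_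
          rw [← enorm_eq_nnnorm, ← ofReal_norm, norm_mul]
  -- rows
  have hrow := schur_row μ m hm0 hm_submult hmm
    (fun x z => ‖⟪ψ x, Sinv (Sinv (ψ z))⟫‖) (fun z y => ‖⟪Sinv (ψ z), ψ y⟫‖)
    (fun x y => ‖⟪Sinv (ψ x), Sinv (ψ y)⟫‖)
    (fun x z => norm_nonneg _) (fun z y => norm_nonneg _)
    MA.norm MR.norm hGkey
  -- columns
  have hcol := schur_col μ m hm0 hm_submult hmm
    (fun x z => ‖⟪ψ x, Sinv (Sinv (ψ z))⟫‖) (fun z y => ‖⟪Sinv (ψ z), ψ y⟫‖)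
    (fun x y => ‖⟪Sinv (ψ x), Sinv (ψ y)⟫‖)
    (fun x z => norm_nonneg _) (fun z y => norm_nonneg _)
    MA.norm MR.norm hGkey
  have hle : amNorm μ m (fun x y => ‖⟪Sinv (ψ x), Sinv (ψ y)⟫‖) ≤
      amNorm μ m (fun x z => ‖⟪ψ x, Sinv (Sinv (ψ z))⟫‖) *
        amNorm μ m (fun x y => ‖⟪Sinv (ψ x), ψ y⟫‖) := by
    exact max_le hrow hcol
  exact ⟨hle, lt_of_le_of_lt hle (ENNReal.mul_lt_top hA hR)⟩
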